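/- Let 𝒳, 𝒴 be measurable spaces, let (X₁,Y₁),…,(X_{n′},Y_{n′}) be i.i.d. random pairs valued in 𝒳 × 𝒴 such that X₁ and Y₁ are independent (the null hypothesis H₀), let n′ = n′₋ + n′₊ with n′₋, n′₊ ≥ 1, and let σ′ be a uniformly distributed random permutation of {1,…,n′₋} independent of the sample. Let s : 𝒳 × 𝒴 → ℝ be measurable such that the law of s(X₁,Y₂) is atomless, and let φ : [0,1] → ℝ be measurable. Form the n′ scores: negatives s(X_i, Y_{σ′(i)}) for 1 ≤ i ≤ n′₋ and positives s(X_i, Y_i) for n′₋ < i ≤ n′; let R′_i denote the rank of the i-th score among all n′ scores, and set Ŵ := (1/n′₊) Σ_{i=n′₋+1}^{n′} φ(R′_i/(n′+1)). Let L denote the law of the analogous statistic computed from n′ i.i.d. Uniform(0,1) scores, and for α ∈ (0,1) define q(α) := inf{ t ∈ ℝ : L((−∞, ∫₀¹φ(u)du + t]) ≥ 1 − α }. Then P( Ŵ > ∫₀¹ φ(u) du + q(α) ) ≤ α. -/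

import Mathlib

open MeasureTheory ProbabilityTheory Finset

def extendPerm {a b : ℕ} (h : a ≤ b) (π : Equiv.Perm (Fin a)) : Equiv.Perm (Fin b) where
  toFun i := if h' : (i : ℕ) < a then Fin.castLE h (π ⟨i, h'⟩) else i
  invFun i := if h' : (i : ℕ) < a then Fin.castLE h (π.symm ⟨i, h'⟩) else i
  left_inv i := by
    by_cases h' : (i : ℕ) < a
    · have h2 : ((Fin.castLE h (π ⟨i, h'⟩) : Fin b) : ℕ) < a := (π ⟨i, h'⟩).isLt
      simp only [dif_pos h', dif_pos h2]
      have h3 : (⟨((Fin.castLE h (π ⟨i, h'⟩) : Fin b) : ℕ), h2⟩ : Fin a) = π ⟨i, h'⟩ := by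
        ext; simp
      rw [h3]
      simp [Fin.ext_iff]
    · simp only [dif_neg h']
  right_inv i := by
    by_cases h' : (i : ℕ) < a
    · have h2 : ((Fin.castLE h (π.symm ⟨i, h'⟩) : Fin b) : ℕ) < a := (π.symm ⟨i, h'⟩).isLt
      simp only [dif_pos h', dif_pos h2]
      have h3 : (⟨((Fin.castLE h (π.symm ⟨i, h'⟩) : Fin b) : ℕ), h2⟩ : Fin a) = π.symm ⟨i, h'⟩ := by
        ext; simp
      rw [h3]
      simp [Fin.ext_iff]
    · simp only [dif_neg h']

lemma extendPerm_apply {a b : ℕ} (h : a ≤ b) (π : Equiv.Perm (Fin a)) (i : Fin b) :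
    extendPerm h π i = if h' : (i : ℕ) < a then Fin.castLE h (π ⟨i, h'⟩) else i := rfl

lemma iid_map_pi {Ω β : Type*} [MeasurableSpace Ω] [MeasurableSpace β] {n : ℕ}
    (P : Measure Ω) [IsProbabilityMeasure P] (f : Fin n → Ω → β)
    (hf : ∀ i, Measurable (f i))
    (hind : iIndepFun f P)
    (ρ : Measure β) [SigmaFinite ρ] (hρ : ∀ i, P.map (f i) = ρ) :
    P.map (fun ω i => f i ω) = Measure.pi (fun _ : Fin n => ρ) := by
  have hmeas : Measurable (fun ω i => f i ω) := measurable_pi_iff.mpr hf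
  refine (Measure.pi_eq (μ := fun _ : Fin n => ρ) fun s hs => ?_).symm
  rw [Measure.map_apply hmeas (MeasurableSet.univ_pi hs)]
  have hpre : (fun ω i => f i ω) ⁻¹' Set.pi Set.univ s = ⋂ i ∈ Finset.univ, f i ⁻¹' s i := by
    ext ω; simp [Set.mem_pi]
  rw [hpre, hind.measure_inter_preimage_eq_mul Finset.univ (fun i _ => hs i)]
  refine Finset.prod_congr rfl fun i _ => ?_
  rw [← Measure.map_apply (hf i) (hs i), hρ i]

lemma pi_map_eval_pair {n : ℕ} {β : Type*} [MeasurableSpace β]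
    (m : Measure β) [IsProbabilityMeasure m] {i j : Fin n} (hij : i ≠ j) :
    Measure.map (fun z : Fin n → β => (z i, z j)) (Measure.pi fun _ : Fin n => m)
      = m.prod m := by
  classical
  have hmeas : Measurable (fun z : Fin n → β => (z i, z j)) :=
    (measurable_pi_apply i).prodMk (measurable_pi_apply j)
  refine (Measure.prod_eq (μ := m) (ν := m) fun A B hA hB => ?_).symm
  rw [Measure.map_apply hmeas (hA.prod hB)]
  set s : Fin n → Set β := fun k => if k = i then A else if k = j then B else Set.univ with hs
  have hmeas_s : ∀ k, MeasurableSet (s k) := by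
    intro k
    simp only [hs]
    split_ifs <;> first | exact hA | exact hB | exact MeasurableSet.univ
  have hpre : (fun z : Fin n → β => (z i, z j)) ⁻¹' (A ×ˢ B) = Set.pi Set.univ s := by
    ext z
    simp only [Set.mem_preimage, Set.mem_prod, Set.mem_pi, Set.mem_univ, true_imp_iff, hs]
    constructor
    · rintro ⟨h1, h2⟩ k
      split_ifs with hk1 hk2
      · exact hk1 ▸ h1
      · exact hk2 ▸ h2
      · trivial
    · intro h
      refine ⟨?_, ?_⟩
      · have := h i; simpa using this
      · have := h j; simp only [if_neg hij.symm] at this; simpa [hij.symm] using this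
  rw [hpre, Measure.pi_pi]
  have : ∀ k : Fin n, m (s k) = if k = i then m A else if k = j then m B else 1 := by
    intro k; simp only [hs]; split_ifs <;> simp
  simp_rw [this]
  rw [show (∏ k : Fin n, if k = i then m A else if k = j then m B else 1)
      = ∏ k ∈ ({i, j} : Finset (Fin n)), (if k = i then m A else if k = j then m B else 1) from
    (Finset.prod_subset (Finset.subset_univ _) (fun k _ hk => by
      simp only [Finset.mem_insert, Finset.mem_singleton, not_or] at hk
      rw [if_neg hk.1, if_neg hk.2])).symm,
    Finset.prod_pair hij, if_pos rfl, if_neg hij.symm, if_pos rfl]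

lemma pi_injective_ae {n : ℕ} (m : Measure ℝ) [IsProbabilityMeasure m]
    (hm : ∀ c : ℝ, m {c} = 0) :
    (Measure.pi fun _ : Fin n => m) {z | ¬ Function.Injective z} = 0 := by
  have hsub : {z : Fin n → ℝ | ¬ Function.Injective z}
      ⊆ ⋃ (i : Fin n) (j : Fin n) (_ : i ≠ j), {z | z i = z j} := by
    intro z hz
    simp only [Function.Injective, not_forall] at hz
    obtain ⟨i, j, hzij, hij⟩ := hz
    exact Set.mem_iUnion.mpr ⟨i, Set.mem_iUnion.mpr ⟨j, Set.mem_iUnion.mpr ⟨hij, hzij⟩⟩⟩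
  refine measure_mono_null hsub ?_
  refine measure_iUnion_null fun i => measure_iUnion_null fun j => measure_iUnion_null fun hij => ?_
  have hdiag : MeasurableSet {p : ℝ × ℝ | p.1 = p.2} :=
    measurableSet_eq_fun measurable_fst measurable_snd
  have h1 : {z : Fin n → ℝ | z i = z j}
      = (fun z : Fin n → ℝ => (z i, z j)) ⁻¹' {p : ℝ × ℝ | p.1 = p.2} := rfl
  rw [h1, ← Measure.map_apply ((measurable_pi_apply i).prodMk (measurable_pi_apply j)) hdiag,
    pi_map_eval_pair m hij, Measure.prod_apply hdiag]
  have h2 : ∀ x : ℝ, (Prod.mk x ⁻¹' {p : ℝ × ℝ | p.1 = p.2}) = {x} := by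
    intro x; ext y; simp [eq_comm]
  simp only [h2, hm]
  simp

lemma strictMono_perm_eq {n : ℕ} {z : Fin n → ℝ} {π τ : Equiv.Perm (Fin n)}
    (hπ : StrictMono (z ∘ π)) (hτ : StrictMono (z ∘ τ)) : π = τ := by
  have he : StrictMono (fun i => π.symm (τ i)) := by
    intro a b hab
    have h1 : (z ∘ π) (π.symm (τ a)) < (z ∘ π) (π.symm (τ b)) := by
      simpa using hτ hab
    exact hπ.lt_iff_lt.mp h1
  have hid : (fun i => π.symm (τ i)) = id := by
    refine (he.range_inj strictMono_id).mp ?_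
    rw [Set.range_id]
    exact Set.range_eq_univ.mpr fun i => ⟨τ.symm (π i), by simp⟩
  ext i
  have := congrFun hid i
  simp only [id_eq] at this
  rw [(Equiv.symm_apply_eq π).mp this]

lemma map_rank_statistic {n : ℕ} (T : (Fin n → ℝ) → ℝ) (hTmeas : Measurable T)
    (hTord : ∀ z z' : Fin n → ℝ, (∀ i j : Fin n, (z j ≤ z i ↔ z' j ≤ z' i)) → T z = T z')
    (m : Measure ℝ) [IsProbabilityMeasure m] (hm : ∀ c : ℝ, m {c} = 0) :
    Measure.map T (Measure.pi fun _ : Fin n => m)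
      = (n.factorial : ENNReal)⁻¹ • ∑ π : Equiv.Perm (Fin n),
          Measure.dirac (T (fun i => ((π.symm i : ℕ) : ℝ))) := by
  classical
  set ν := (Measure.pi fun _ : Fin n => m) with hν
  set A : Equiv.Perm (Fin n) → Set (Fin n → ℝ) := fun π => {z | StrictMono (z ∘ π)} with hA
  set rep : Equiv.Perm (Fin n) → (Fin n → ℝ) := fun π i => ((π.symm i : ℕ) : ℝ) with hrepdef
  have hAmeas : ∀ π, MeasurableSet (A π) := by
    intro π
    have : A π = ⋂ (i : Fin n), ⋂ (j : Fin n), ⋂ (_ : i < j), {z : Fin n → ℝ | z (π i) < z (π j)} := by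
      ext z
      simp only [hA, Set.mem_setOf_eq, Set.mem_iInter]
      exact ⟨fun h i j hij => h hij, fun h a b hab => h a b hab⟩
    rw [this]
    exact MeasurableSet.iInter fun i => MeasurableSet.iInter fun j => MeasurableSet.iInter
      fun _ => measurableSet_lt (measurable_pi_apply _) (measurable_pi_apply _)
  have hord : ∀ π, ∀ z ∈ A π, ∀ i j : Fin n, (z j ≤ z i ↔ π.symm j ≤ π.symm i) := by
    intro π z hz i j
    have h1 : z j = (z ∘ π) (π.symm j) := by simp
    have h2 : z i = (z ∘ π) (π.symm i) := by simp
    rw [h1, h2, hz.le_iff_le]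
  have hrepmem : ∀ π, rep π ∈ A π := by
    intro π
    intro a b hab
    simp only [hrepdef, Function.comp_apply, Equiv.symm_apply_apply]
    exact_mod_cast hab
  have hTconst : ∀ π, ∀ z ∈ A π, T z = T (rep π) := by
    intro π z hz
    refine hTord z (rep π) fun i j => ?_
    rw [hord π z hz i j]
    have hiff : rep π j ≤ rep π i ↔ π.symm j ≤ π.symm i := by
      simp only [hrepdef]
      exact_mod_cast Iff.rfl
    rw [hiff]
  have hdisj : Pairwise (Function.onFun Disjoint A) := by
    intro π τ hne
    rw [Function.onFun, Set.disjoint_left]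
    intro z hzπ hzτ
    exact hne (strictMono_perm_eq hzπ hzτ)
  have hUc : ν (⋃ π, A π)ᶜ = 0 := by
    refine measure_mono_null ?_ (pi_injective_ae m hm)
    intro z hz
    simp only [Set.mem_compl_iff, Set.mem_iUnion, not_exists] at hz
    intro hinj
    have hmono := Tuple.monotone_sort z
    have hsm : StrictMono (z ∘ Tuple.sort z) :=
      hmono.strictMono_of_injective (hinj.comp (Equiv.injective _))
    exact hz (Tuple.sort z) hsm
  have hU : ν (⋃ π, A π) = 1 := by
    have h := measure_add_measure_compl (μ := ν) (MeasurableSet.iUnion fun π => hAmeas π)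
    rw [hUc, add_zero] at h
    simpa using h
  have hmp : ∀ π : Equiv.Perm (Fin n), ν (A π) = ν (A 1) := by
    intro π
    have hpres : MeasurePreserving (fun z : Fin n → ℝ => z ∘ π) ν ν := by
      have h := measurePreserving_arrowCongr' (fun _ : Fin n => m) (fun _ : Fin n => m)
        π.symm (MeasurableEquiv.refl ℝ) (fun _ => ⟨measurable_id, Measure.map_id⟩)
      exact h
    have hset : A π = (fun z : Fin n → ℝ => z ∘ π) ⁻¹' (A 1) := by
      ext z
      simp only [hA, Set.mem_setOf_eq, Set.mem_preimage]
      constructor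
      · intro h; simpa [Function.comp] using h
      · intro h; simpa [Function.comp] using h
    rw [hset]
    exact hpres.measure_preimage (hAmeas 1).nullMeasurableSet
  have hsum : ∑ π : Equiv.Perm (Fin n), ν (A π) = 1 := by
    rw [← hU, measure_iUnion hdisj hAmeas, tsum_fintype]
  have hcard : (Fintype.card (Equiv.Perm (Fin n)) : ENNReal) = (n.factorial : ENNReal) := by
    rw [Fintype.card_perm, Fintype.card_fin]
  have hAval : ∀ π, ν (A π) = (n.factorial : ENNReal)⁻¹ := by
    have h1 : (n.factorial : ENNReal) * ν (A 1) = 1 := by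
      calc (n.factorial : ENNReal) * ν (A 1)
          = ∑ _π : Equiv.Perm (Fin n), ν (A 1) := by
            rw [Finset.sum_const, nsmul_eq_mul, ← hcard]
            simp
        _ = ∑ π : Equiv.Perm (Fin n), ν (A π) := by
            exact Finset.sum_congr rfl fun π _ => (hmp π).symm
        _ = 1 := hsum
    intro π
    rw [hmp π]
    exact ENNReal.eq_inv_of_mul_eq_one_left (by rw [mul_comm] at h1; exact h1)
  refine Measure.ext fun B hB => ?_
  rw [Measure.map_apply hTmeas hB]
  have hsplit : ν (T ⁻¹' B) = ∑ π : Equiv.Perm (Fin n), ν (T ⁻¹' B ∩ A π) := by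
    have h1 : ν (T ⁻¹' B) = ν (T ⁻¹' B ∩ ⋃ π, A π) := by
      refine le_antisymm ?_ (measure_mono Set.inter_subset_left)
      calc ν (T ⁻¹' B) ≤ ν ((T ⁻¹' B ∩ ⋃ π, A π) ∪ (⋃ π, A π)ᶜ) := by
            refine measure_mono fun z hz => ?_
            by_cases h : z ∈ ⋃ π, A π
            · exact Or.inl ⟨hz, h⟩
            · exact Or.inr h
        _ ≤ ν (T ⁻¹' B ∩ ⋃ π, A π) + ν (⋃ π, A π)ᶜ := measure_union_le _ _
        _ = ν (T ⁻¹' B ∩ ⋃ π, A π) := by rw [hUc, add_zero]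
    rw [h1, Set.inter_iUnion, measure_iUnion ?_ ?_, tsum_fintype]
    · intro π τ hne
      exact Set.disjoint_left.mpr fun z hz1 hz2 =>
        Set.disjoint_left.mp (hdisj hne) hz1.2 hz2.2
    · exact fun π => (hTmeas hB).inter (hAmeas π)
  rw [hsplit]
  have hval : ∀ π, ν (T ⁻¹' B ∩ A π)
      = if T (rep π) ∈ B then (n.factorial : ENNReal)⁻¹ else 0 := by
    intro π
    by_cases h : T (rep π) ∈ B
    · rw [if_pos h]
      have : T ⁻¹' B ∩ A π = A π := by
        refine Set.inter_eq_right.mpr fun z hz => ?_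
        simp only [Set.mem_preimage]
        rw [hTconst π z hz]
        exact h
      rw [this, hAval]
    · rw [if_neg h]
      have : T ⁻¹' B ∩ A π = ∅ := by
        refine Set.eq_empty_iff_forall_notMem.mpr fun z hz => ?_
        exact h (hTconst π z hz.2 ▸ hz.1)
      rw [this, measure_empty]
  simp_rw [hval]
  rw [Measure.smul_apply, Measure.coe_finset_sum, Finset.sum_apply]
  have : ∀ π : Equiv.Perm (Fin n), Measure.dirac (T (rep π)) B
      = if T (rep π) ∈ B then (1 : ENNReal) else 0 := by
    intro π
    rw [Measure.dirac_apply' _ hB]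
    simp [Set.indicator_apply]
  rw [Finset.sum_congr rfl fun π _ => this π]
  simp only [smul_eq_mul]
  rw [Finset.mul_sum]
  exact Finset.sum_congr rfl fun π _ => by split_ifs <;> simp

lemma quantile_bound (L : Measure ℝ) [IsProbabilityMeasure L] (c α : ℝ)
    (hα : α ∈ Set.Ioo (0 : ℝ) 1) (q : ℝ)
    (hq : q = sInf {t : ℝ | ENNReal.ofReal (1 - α) ≤ L (Set.Iic (c + t))}) :
    L (Set.Ioi (c + q)) ≤ ENNReal.ofReal α := by
  set S := {t : ℝ | ENNReal.ofReal (1 - α) ≤ L (Set.Iic (c + t))} with hS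
  have hmono : ∀ t ∈ S, ∀ t', t ≤ t' → t' ∈ S := by
    intro t ht t' htt'
    exact le_trans ht (measure_mono (Set.Iic_subset_Iic.mpr (by linarith)))
  have hne : S.Nonempty := by
    have hlim : Filter.Tendsto (fun k : ℕ => L (Set.Iic (c + k))) Filter.atTop
        (nhds (L (⋃ k : ℕ, Set.Iic (c + k)))) := by
      refine tendsto_measure_iUnion_atTop ?_
      intro a b hab
      exact Set.Iic_subset_Iic.mpr (by exact_mod_cast add_le_add_right (Nat.cast_le.mpr hab) c)
    have hUeq : (⋃ k : ℕ, Set.Iic (c + (k : ℝ))) = Set.univ := by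
      refine Set.eq_univ_iff_forall.mpr fun x => ?_
      obtain ⟨k, hk⟩ := exists_nat_ge (x - c)
      exact Set.mem_iUnion.mpr ⟨k, by simp only [Set.mem_Iic]; linarith⟩
    rw [hUeq, measure_univ] at hlim
    have hlt : ENNReal.ofReal (1 - α) < 1 := ENNReal.ofReal_lt_one.mpr (by linarith [hα.1])
    have := hlim.eventually (eventually_gt_nhds hlt)
    obtain ⟨k, hk⟩ := this.exists
    exact ⟨k, le_of_lt hk⟩
  have hqS : L (Set.Iic (c + q)) ≥ ENNReal.ofReal (1 - α) := by
    by_cases hbdd : BddBelow S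
    · -- q = sInf S; q + ε ∈ S for all ε > 0
      have hstep : ∀ k : ℕ, q + 1 / (k + 1) ∈ S := by
        intro k
        have hpos : (0 : ℝ) < 1 / (k + 1) := by positivity
        have : sInf S < q + 1 / (k + 1) := by rw [← hq] at *; linarith
        obtain ⟨t, htS, htlt⟩ := (csInf_lt_iff hbdd hne).mp this
        exact hmono t htS _ (le_of_lt htlt)
      have hInter : (⋂ k : ℕ, Set.Iic (c + (q + 1 / (k + 1)))) = Set.Iic (c + q) := by
        ext x
        simp only [Set.mem_iInter, Set.mem_Iic]
        constructor
        · intro h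
          by_contra hx
          push_neg at hx
          obtain ⟨k, hk⟩ := exists_nat_one_div_lt (show 0 < x - (c + q) by linarith)
          have := h k
          linarith
        · intro h k
          have hpos : (0 : ℝ) < 1 / (k + 1) := by positivity
          linarith
      have hlim : Filter.Tendsto (fun k : ℕ => L (Set.Iic (c + (q + 1 / (k + 1)))))
          Filter.atTop (nhds (L (⋂ k : ℕ, Set.Iic (c + (q + 1 / (k + 1)))))) := by
        refine tendsto_measure_iInter_atTop (fun k => (measurableSet_Iic).nullMeasurableSet) ?_
          ⟨0, measure_ne_top _ _⟩
        intro a b hab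
        refine Set.Iic_subset_Iic.mpr ?_
        have : 1 / ((b : ℝ) + 1) ≤ 1 / ((a : ℝ) + 1) := by
          apply one_div_le_one_div_of_le
          · positivity
          · exact_mod_cast add_le_add_left (Nat.cast_le.mpr hab) 1
        linarith
      rw [hInter] at hlim
      refine ge_of_tendsto hlim ?_
      exact Filter.Eventually.of_forall fun k => hstep k
    · -- S is unbounded below hence S = univ
      have : q ∈ S := by
        rw [not_bddBelow_iff] at hbdd
        obtain ⟨t, htS, htlt⟩ := hbdd q
        exact hmono t htS q (le_of_lt htlt)
      exact this
  have hcompl : L (Set.Ioi (c + q)) = 1 - L (Set.Iic (c + q)) := by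
    rw [← Set.compl_Iic, measure_compl measurableSet_Iic (measure_ne_top _ _), measure_univ]
  rw [hcompl]
  have h1 : ENNReal.ofReal (1 - α) = 1 - ENNReal.ofReal α := by
    rw [ENNReal.ofReal_sub 1 (le_of_lt hα.1), ENNReal.ofReal_one]
  calc (1 : ENNReal) - L (Set.Iic (c + q)) ≤ 1 - ENNReal.ofReal (1 - α) :=
        tsub_le_tsub_left hqS 1
    _ = ENNReal.ofReal α := by
        rw [h1, ENNReal.sub_sub_cancel ENNReal.one_ne_top
          (ENNReal.ofReal_le_one.mpr (le_of_lt hα.2))]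

lemma rankT_meas {n nminus nplus : ℕ} (φ : ℝ → ℝ) (hφ : Measurable φ)
    (T : (Fin n → ℝ) → ℝ)
    (hT : ∀ z, T z = (nplus : ℝ)⁻¹
      * ∑ i ∈ univ.filter (fun i : Fin n => nminus ≤ (i : ℕ)),
          φ (((univ.filter fun j : Fin n => z j ≤ z i).card : ℝ) / (n + 1))) :
    Measurable T := by
  classical
  have hTeq : T = fun z => (nplus : ℝ)⁻¹
      * ∑ i ∈ univ.filter (fun i : Fin n => nminus ≤ (i : ℕ)),
          φ (((univ.filter fun j : Fin n => z j ≤ z i).card : ℝ) / (n + 1)) := funext hT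
  rw [hTeq]
  refine Measurable.const_mul ?_ _
  refine Finset.measurable_sum _ fun i _ => ?_
  refine hφ.comp ?_
  refine Measurable.div_const ?_ _
  have : (fun z : Fin n → ℝ => ((univ.filter fun j : Fin n => z j ≤ z i).card : ℝ))
      = fun z => ∑ j : Fin n, if z j ≤ z i then (1 : ℝ) else 0 := by
    funext z
    rw [Finset.card_filter]
    push_cast
    rfl
  rw [this]
  refine Finset.measurable_sum _ fun j _ => ?_
  exact Measurable.ite (measurableSet_le (measurable_pi_apply j) (measurable_pi_apply i))
    measurable_const measurable_const

lemma rankT_ord {n nminus nplus : ℕ} (φ : ℝ → ℝ)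
    (T : (Fin n → ℝ) → ℝ)
    (hT : ∀ z, T z = (nplus : ℝ)⁻¹
      * ∑ i ∈ univ.filter (fun i : Fin n => nminus ≤ (i : ℕ)),
          φ (((univ.filter fun j : Fin n => z j ≤ z i).card : ℝ) / (n + 1)))
    (z z' : Fin n → ℝ) (h : ∀ i j : Fin n, (z j ≤ z i ↔ z' j ≤ z' i)) : T z = T z' := by
  classical
  rw [hT, hT]
  congr 1
  refine Finset.sum_congr rfl fun i _ => ?_
  have : (univ.filter fun j : Fin n => z j ≤ z i) = univ.filter fun j => z' j ≤ z' i :=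
    Finset.filter_congr fun j _ => by rw [h i j]
  rw [this]

lemma map_rewire {𝒳 𝒴 : Type*} [MeasurableSpace 𝒳] [MeasurableSpace 𝒴] {n : ℕ}
    (νX : Measure 𝒳) (νY : Measure 𝒴) [IsProbabilityMeasure νX] [IsProbabilityMeasure νY]
    (s : 𝒳 × 𝒴 → ℝ) (hs : Measurable s) (g : Equiv.Perm (Fin n)) :
    Measure.map (fun (w : Fin n → 𝒳 × 𝒴) (i : Fin n) => s ((w i).1, (w (g i)).2))
      (Measure.pi fun _ : Fin n => νX.prod νY)
      = Measure.pi fun _ : Fin n => Measure.map s (νX.prod νY) := by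
  set E := MeasurableEquiv.arrowProdEquivProdArrow 𝒳 𝒴 (Fin n) with hE
  have mp1 : MeasurePreserving E (Measure.pi fun _ : Fin n => νX.prod νY)
      ((Measure.pi fun _ : Fin n => νX).prod (Measure.pi fun _ : Fin n => νY)) :=
    measurePreserving_arrowProdEquivProdArrow 𝒳 𝒴 (Fin n) (fun _ => νX) (fun _ => νY)
  have mpg : MeasurePreserving (fun v : Fin n → 𝒴 => v ∘ g)
      (Measure.pi fun _ : Fin n => νY) (Measure.pi fun _ : Fin n => νY) :=
    measurePreserving_arrowCongr' (fun _ : Fin n => νY) (fun _ : Fin n => νY)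
      g.symm (MeasurableEquiv.refl 𝒴) (fun _ => ⟨measurable_id, Measure.map_id⟩)
  have mp2 : MeasurePreserving (Prod.map (id : (Fin n → 𝒳) → (Fin n → 𝒳))
        (fun v : Fin n → 𝒴 => v ∘ g))
      ((Measure.pi fun _ : Fin n => νX).prod (Measure.pi fun _ : Fin n => νY))
      ((Measure.pi fun _ : Fin n => νX).prod (Measure.pi fun _ : Fin n => νY)) :=
    (MeasurePreserving.id _).prod mpg
  have mp3 : MeasurePreserving E.symm
      ((Measure.pi fun _ : Fin n => νX).prod (Measure.pi fun _ : Fin n => νY))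
      (Measure.pi fun _ : Fin n => νX.prod νY) :=
    mp1.symm E
  have mp4 : MeasurePreserving (fun (w : Fin n → 𝒳 × 𝒴) (i : Fin n) => s (w i))
      (Measure.pi fun _ : Fin n => νX.prod νY)
      (Measure.pi fun _ : Fin n => Measure.map s (νX.prod νY)) :=
    measurePreserving_pi _ _ (fun _ => ⟨hs, rfl⟩)
  have htot := mp4.comp (mp3.comp (mp2.comp mp1))
  have hfun : ((fun (w : Fin n → 𝒳 × 𝒴) (i : Fin n) => s (w i)) ∘ (⇑E.symm ∘
      (Prod.map (id : (Fin n → 𝒳) → (Fin n → 𝒳)) (fun v : Fin n → 𝒴 => v ∘ g) ∘ ⇑E)))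
      = fun (w : Fin n → 𝒳 × 𝒴) (i : Fin n) => s ((w i).1, (w (g i)).2) := by
    funext w
    funext i
    rfl
  rw [← hfun]
  exact htot.map_eq

noncomputable instance {m : ℕ} : MeasurableSpace (Equiv.Perm (Fin m)) := ⊤

/-- Proposition 2 of the paper (type-I error bound of the ranking-based independence rank
test): under the null hypothesis, the shuffled rank statistic exceeds
`∫₀¹φ + q(α)` with probability at most `α`, where `q(α)` is the `(1−α)`-quantile of the
distribution-free null law `L` of the statistic. -/
theorem stmt_8 {𝒳 𝒴 Ω : Type*} [MeasurableSpace 𝒳] [MeasurableSpace 𝒴] [MeasurableSpace Ω]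
    (P : Measure Ω) [IsProbabilityMeasure P]
    (nn nminus nplus : ℕ) (hnn : nn = nminus + nplus)
    (hnminus : 1 ≤ nminus) (hnplus : 1 ≤ nplus)
    (X : Fin nn → Ω → 𝒳) (Y : Fin nn → Ω → 𝒴)
    (hX : ∀ i, Measurable (X i)) (hY : ∀ i, Measurable (Y i))
    (hiid_indep : iIndepFun
      (fun i ω => (X i ω, Y i ω)) P)
    (hiid_ident : ∀ i j : Fin nn, Measure.map (fun ω => (X i ω, Y i ω)) P
      = Measure.map (fun ω => (X j ω, Y j ω)) P)
    (hnull : IndepFun (X ⟨0, by omega⟩) (Y ⟨0, by omega⟩) P)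
    (σ' : Ω → Equiv.Perm (Fin nminus))
    (hσ'_meas : Measurable σ')
    (hσ'_unif : ∀ π : Equiv.Perm (Fin nminus),
      P {ω | σ' ω = π} = (Nat.factorial nminus : ENNReal)⁻¹)
    (hσ'_indep : IndepFun σ' (fun ω => fun i : Fin nn => (X i ω, Y i ω)) P)
    (s : 𝒳 × 𝒴 → ℝ) (hs_meas : Measurable s)
    (hs_atomless : ∀ c : ℝ,
      P {ω | s (X ⟨0, by omega⟩ ω, Y ⟨1, by omega⟩ ω) = c} = 0)
    (φ : ℝ → ℝ) (hφ : Measurable φ)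
    (score : Ω → Fin nn → ℝ)
    (hscore : ∀ ω i, score ω i = if h : (i : ℕ) < nminus
      then s (X i ω, Y (Fin.castLE (by omega) (σ' ω ⟨(i : ℕ), h⟩)) ω)
      else s (X i ω, Y i ω))
    (What : Ω → ℝ)
    (hWhat : ∀ ω, What ω = (nplus : ℝ)⁻¹
      * ∑ i ∈ univ.filter (fun i : Fin nn => nminus ≤ (i : ℕ)),
          φ (((univ.filter fun j : Fin nn => score ω j ≤ score ω i).card : ℝ) / (nn + 1)))
    (T : (Fin nn → ℝ) → ℝ)
    (hT : ∀ z, T z = (nplus : ℝ)⁻¹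
      * ∑ i ∈ univ.filter (fun i : Fin nn => nminus ≤ (i : ℕ)),
          φ (((univ.filter fun j : Fin nn => z j ≤ z i).card : ℝ) / (nn + 1)))
    (L : Measure ℝ)
    (hL : L = Measure.map T (Measure.pi fun _ : Fin nn => volume.restrict (Set.Ioo 0 1)))
    (α : ℝ) (hα : α ∈ Set.Ioo (0 : ℝ) 1)
    (q : ℝ)
    (hq : q = sInf {t : ℝ |
      ENNReal.ofReal (1 - α) ≤ L (Set.Iic ((∫ u in (0 : ℝ)..1, φ u) + t))}) :
    P {ω | (∫ u in (0 : ℝ)..1, φ u) + q < What ω} ≤ ENNReal.ofReal α := by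
  classical
  set c : ℝ := ∫ u in (0 : ℝ)..1, φ u with hc
  have hle : nminus ≤ nn := by omega
  set i0 : Fin nn := ⟨0, by omega⟩ with hi0
  set i1 : Fin nn := ⟨1, by omega⟩ with hi1
  -- basic measurability
  have hVmeas : ∀ i : Fin nn, Measurable (fun ω => (X i ω, Y i ω)) :=
    fun i => (hX i).prodMk (hY i)
  set sample : Ω → Fin nn → 𝒳 × 𝒴 := fun ω i => (X i ω, Y i ω) with hsampledef
  have hsample_meas : Measurable sample := measurable_pi_iff.mpr hVmeas
  -- laws
  set νX : Measure 𝒳 := P.map (X i0) with hνX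
  set νY : Measure 𝒴 := P.map (Y i0) with hνY
  haveI : IsProbabilityMeasure νX := Measure.isProbabilityMeasure_map (hX i0).aemeasurable
  haveI : IsProbabilityMeasure νY := Measure.isProbabilityMeasure_map (hY i0).aemeasurable
  set ρ : Measure (𝒳 × 𝒴) := νX.prod νY with hρ
  haveI : IsProbabilityMeasure ρ := by infer_instance
  have hρ0 : P.map (fun ω => (X i0 ω, Y i0 ω)) = ρ :=
    (indepFun_iff_map_prod_eq_prod_map_map (hX i0).aemeasurable (hY i0).aemeasurable).mp hnull
  have hVlaw : ∀ i : Fin nn, P.map (fun ω => (X i ω, Y i ω)) = ρ :=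
    fun i => (hiid_ident i i0).trans hρ0
  have hsamplelaw : P.map sample = Measure.pi (fun _ : Fin nn => ρ) :=
    iid_map_pi P (fun i ω => (X i ω, Y i ω)) hVmeas hiid_indep ρ hVlaw
  set μ : Measure ℝ := Measure.map s ρ with hμ
  haveI : IsProbabilityMeasure μ := Measure.isProbabilityMeasure_map hs_meas.aemeasurable
  -- μ has no atoms
  have hne01 : i0 ≠ i1 := by
    rw [hi0, hi1]
    exact Fin.ne_of_val_ne (by norm_num)
  have hXY01 : IndepFun (X i0) (Y i1) P :=
    (hiid_indep.indepFun hne01).comp measurable_fst measurable_snd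
  have hY1law : P.map (Y i1) = νY := by
    have h1 : P.map (Y i1) = (P.map (fun ω => (X i1 ω, Y i1 ω))).map Prod.snd :=
      (Measure.map_map measurable_snd (hVmeas i1)).symm
    rw [h1, hiid_ident i1 i0, Measure.map_map measurable_snd (hVmeas i0)]
    rfl
  have hpair01law : P.map (fun ω => (X i0 ω, Y i1 ω)) = ρ := by
    rw [(indepFun_iff_map_prod_eq_prod_map_map (hX i0).aemeasurable
      (hY i1).aemeasurable).mp hXY01, hY1law]
  have hμ_atomless : ∀ cc : ℝ, μ {cc} = 0 := by
    intro cc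
    rw [hμ, Measure.map_apply hs_meas (measurableSet_singleton cc), ← hpair01law,
      Measure.map_apply ((hX i0).prodMk (hY i1)) (hs_meas (measurableSet_singleton cc))]
    exact hs_atomless cc
  -- T properties
  have hTmeas : Measurable T := rankT_meas φ hφ T hT
  have hTord : ∀ z z' : Fin nn → ℝ, (∀ i j : Fin nn, (z j ≤ z i ↔ z' j ≤ z' i)) → T z = T z' :=
    rankT_ord φ T hT
  -- the rewired score function
  set F : Equiv.Perm (Fin nminus) → (Fin nn → 𝒳 × 𝒴) → (Fin nn → ℝ) :=
    fun π w i => s ((w i).1, (w (extendPerm hle π i)).2) with hF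
  have hFmeas : ∀ π, Measurable (F π) := by
    intro π
    refine measurable_pi_iff.mpr fun i => hs_meas.comp ?_
    exact ((measurable_pi_apply i).fst).prodMk ((measurable_pi_apply _).snd)
  have hFlaw : ∀ π, Measure.map (F π) (Measure.pi fun _ : Fin nn => ρ)
      = Measure.pi fun _ : Fin nn => μ :=
    fun π => map_rewire νX νY s hs_meas (extendPerm hle π)
  have hscoreF : ∀ ω, score ω = F (σ' ω) (sample ω) := by
    intro ω
    funext i
    rw [hscore, hF]
    by_cases h : (i : ℕ) < nminus
    · rw [dif_pos h]
      simp only [hsampledef]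
      rw [extendPerm_apply, dif_pos h]
    · rw [dif_neg h]
      simp only [hsampledef]
      rw [extendPerm_apply, dif_neg h]
  -- main law computation
  have hkey : ∀ B : Set ℝ, MeasurableSet B →
      P {ω | T (score ω) ∈ B} = (Measure.map T (Measure.pi fun _ : Fin nn => μ)) B := by
    intro B hB
    have hset : {ω | T (score ω) ∈ B}
        = ⋃ π ∈ (univ : Finset (Equiv.Perm (Fin nminus))),
            ((fun ω => T (F π (sample ω))) ⁻¹' B ∩ σ' ⁻¹' {π}) := by
      ext ω
      simp only [Set.mem_setOf_eq, Set.mem_iUnion, Set.mem_inter_iff, Set.mem_preimage,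
        Set.mem_singleton_iff, Finset.mem_univ, exists_prop, true_and]
      constructor
      · intro h
        exact ⟨σ' ω, by rw [← hscoreF ω]; exact h, rfl⟩
      · rintro ⟨π, hmem, hπ⟩
        rw [hscoreF ω, hπ]
        exact hmem
    have hmeaspiece : ∀ π : Equiv.Perm (Fin nminus),
        MeasurableSet ((fun ω => T (F π (sample ω))) ⁻¹' B ∩ σ' ⁻¹' {π}) := by
      intro π
      exact ((hTmeas.comp ((hFmeas π).comp hsample_meas)) hB).inter
        (hσ'_meas (MeasurableSpace.measurableSet_top))
    have hdisj : Set.Pairwise (↑(univ : Finset (Equiv.Perm (Fin nminus))))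
        (Function.onFun Disjoint
          (fun π => (fun ω => T (F π (sample ω))) ⁻¹' B ∩ σ' ⁻¹' {π})) := by
      intro π _ τ _ hne
      rw [Function.onFun, Set.disjoint_left]
      rintro ω ⟨_, h1⟩ ⟨_, h2⟩
      exact hne (h1.symm.trans h2)
    rw [hset, measure_biUnion_finset hdisj (fun π _ => hmeaspiece π)]
    have hterm : ∀ π : Equiv.Perm (Fin nminus),
        P ((fun ω => T (F π (sample ω))) ⁻¹' B ∩ σ' ⁻¹' {π})
          = (Nat.factorial nminus : ENNReal)⁻¹
            * (Measure.map T (Measure.pi fun _ : Fin nn => μ)) B := by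
      intro π
      have h1 : (fun ω => T (F π (sample ω))) ⁻¹' B = sample ⁻¹' ((F π) ⁻¹' (T ⁻¹' B)) := rfl
      rw [h1, Set.inter_comm,
        hσ'_indep.measure_inter_preimage_eq_mul _ _ MeasurableSpace.measurableSet_top
          ((hFmeas π) (hTmeas hB))]
      have h2 : σ' ⁻¹' {π} = {ω | σ' ω = π} := rfl
      rw [h2, hσ'_unif π]
      congr 1
      rw [← Measure.map_apply hsample_meas ((hFmeas π) (hTmeas hB)), hsamplelaw,
        ← Measure.map_apply (hFmeas π) (hTmeas hB), hFlaw π,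
        ← Measure.map_apply hTmeas hB]
    simp_rw [hterm]
    rw [Finset.sum_const, nsmul_eq_mul, ← mul_assoc]
    have hcard : ((univ : Finset (Equiv.Perm (Fin nminus))).card : ENNReal)
        = (Nat.factorial nminus : ENNReal) := by
      rw [Finset.card_univ, Fintype.card_perm, Fintype.card_fin]
    rw [hcard, ENNReal.mul_inv_cancel (by exact_mod_cast Nat.factorial_ne_zero nminus)
      (ENNReal.natCast_ne_top _), one_mul]
  -- the uniform measure
  set u : Measure ℝ := volume.restrict (Set.Ioo 0 1) with hu
  haveI : IsProbabilityMeasure u := by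
    constructor
    rw [hu, Measure.restrict_apply_univ]
    simp [Real.volume_Ioo]
  have hu_atomless : ∀ cc : ℝ, u {cc} = 0 := by
    intro cc
    rw [hu, Measure.restrict_apply (measurableSet_singleton cc)]
    exact measure_mono_null Set.inter_subset_left Real.volume_singleton
  -- distribution-freeness
  have hTlaw : Measure.map T (Measure.pi fun _ : Fin nn => μ) = L := by
    rw [hL, map_rank_statistic T hTmeas hTord μ hμ_atomless,
      map_rank_statistic T hTmeas hTord u hu_atomless]
  haveI : IsProbabilityMeasure L := by
    rw [hL]
    exact Measure.isProbabilityMeasure_map hTmeas.aemeasurable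
  -- put it together
  have hWT : ∀ ω, What ω = T (score ω) := by
    intro ω
    rw [hWhat, hT]
  have hgoal : {ω | c + q < What ω} = {ω | T (score ω) ∈ Set.Ioi (c + q)} := by
    ext ω
    simp only [Set.mem_setOf_eq, Set.mem_Ioi, hWT]
  rw [hgoal, hkey (Set.Ioi (c + q)) measurableSet_Ioi, hTlaw]
  exact quantile_bound L c α hα q hq
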